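/- Let w ∈ ℝ² be a nonzero vector of irrational slope (w is not a real scalar multiple of any nonzero integer vector) and let v ∈ Z. Then there exists a unique vector u ∈ Z satisfying |w×u| < (1/2)|w×v|, |u×v| = 1, and w·u > 0. Moreover, if b > 0, |w| > b|v| and |w×v| ≤ ε ≤ 1/(2√2), then (1 − ε/b)·|w|/|w×v| ≤ |u| ≤ (1 + ε/b)·|w|/|w×v|. -/

import Mathlib

open Pointwise

noncomputable section

/-- Cross product of two vectors in ℝ²: `(a,b) × (c,d) = a d − b c`. -/
def crossP (u v : ℝ × ℝ) : ℝ := u.1 * v.2 - u.2 * v.1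

/-- Euclidean inner product on ℝ². -/
def dotP (u v : ℝ × ℝ) : ℝ := u.1 * v.1 + u.2 * v.2

/-- Euclidean norm on ℝ². -/
def nrm (u : ℝ × ℝ) : ℝ := Real.sqrt (u.1 ^ 2 + u.2 ^ 2)

/-- The set `Z` of primitive integer vectors. -/
def Zset : Set (ℝ × ℝ) := {v | ∃ p q : ℤ, Int.gcd p q = 1 ∧ v = ((p : ℝ), (q : ℝ))}

lemma nrm_eq_cabs (z : ℝ × ℝ) : nrm z = ‖(⟨z.1, z.2⟩ : ℂ)‖ := by
  rw [nrm, Complex.norm_def, Complex.normSq_mk]; ring_nf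

lemma nrm_nonneg (z : ℝ × ℝ) : 0 ≤ nrm z := Real.sqrt_nonneg _

lemma nrm_pos (z : ℝ × ℝ) (hz : z ≠ 0) : 0 < nrm z := by
  have h1 : z.1 ≠ 0 ∨ z.2 ≠ 0 := by
    by_contra h
    push_neg at h
    exact hz (Prod.ext_iff.mpr ⟨by simpa using h.1, by simpa using h.2⟩)
  apply Real.sqrt_pos.2
  rcases h1 with h | h <;> positivity

lemma nrm_eq_norm (z : ℝ × ℝ) : nrm z = ‖((⟨z.1, z.2⟩ : ℂ))‖ := by
  rw [nrm_eq_cabs]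

lemma eq_smul_of_cross_eq_zero (w z : ℝ × ℝ) (hz : z.1 ^ 2 + z.2 ^ 2 ≠ 0)
    (h : crossP w z = 0) :
    w = ((w.1 * z.1 + w.2 * z.2) / (z.1 ^ 2 + z.2 ^ 2)) • z := by
  have h' : w.1 * z.2 - w.2 * z.1 = 0 := h
  have e1 : w.1 = ((w.1 * z.1 + w.2 * z.2) / (z.1 ^ 2 + z.2 ^ 2)) * z.1 := by
    field_simp
    linear_combination z.2 * h'
  have e2 : w.2 = ((w.1 * z.1 + w.2 * z.2) / (z.1 ^ 2 + z.2 ^ 2)) * z.2 := by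
    field_simp
    linear_combination (-z.1) * h'
  exact Prod.ext_iff.mpr ⟨e1, e2⟩

lemma cross_ne (w : ℝ × ℝ)
    (hirr : ∀ p q : ℤ, ¬(p = 0 ∧ q = 0) → ∀ c : ℝ,
      w ≠ c • (((p : ℝ), (q : ℝ)) : ℝ × ℝ))
    (p q : ℤ) (h : ¬(p = 0 ∧ q = 0)) :
    crossP w (((p : ℝ), (q : ℝ))) ≠ 0 := by
  intro h0
  have hpq : ((p:ℝ))^2 + ((q:ℝ))^2 ≠ 0 := by
    have h1 : (p:ℝ) ≠ 0 ∨ (q:ℝ) ≠ 0 := by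
      rcases not_and_or.mp h with h' | h'
      · exact Or.inl (by exact_mod_cast h')
      · exact Or.inr (by exact_mod_cast h')
    rcases h1 with h' | h' <;> positivity
  have := eq_smul_of_cross_eq_zero w ((p:ℝ), (q:ℝ)) (by simpa using hpq) (by simpa using h0)
  exact hirr p q h _ this

lemma bounds_aux (w u V : ℝ × ℝ) (hw : w ≠ 0) (hc : crossP w V ≠ 0)
    (hs : |crossP u V| = 1) (hx : |crossP w u| < |crossP w V| / 2) :
    ∀ b ε : ℝ, 0 < b → b * nrm V < nrm w → |crossP w V| ≤ ε →
      ε ≤ 1 / (2 * Real.sqrt 2) →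
      (1 - ε / b) * nrm w / |crossP w V| ≤ nrm u ∧
      nrm u ≤ (1 + ε / b) * nrm w / |crossP w V| := by
  intro b ε hb hbv hce hεu
  have hid : ((crossP w V : ℝ) : ℂ) * ⟨u.1, u.2⟩ =
      ((crossP u V : ℝ) : ℂ) * ⟨w.1, w.2⟩ + ((crossP w u : ℝ) : ℂ) * ⟨V.1, V.2⟩ := by
    simp only [Complex.ext_iff, Complex.add_re, Complex.add_im, Complex.mul_re,
      Complex.mul_im, Complex.ofReal_re, Complex.ofReal_im, crossP]
    constructor <;> ring
  have h1 : |crossP w V| * nrm u =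
      ‖((crossP u V : ℝ) : ℂ) * ⟨w.1, w.2⟩ + ((crossP w u : ℝ) : ℂ) * ⟨V.1, V.2⟩‖ := by
    rw [nrm_eq_norm, ← hid, norm_mul, Complex.norm_real, Real.norm_eq_abs]
  have hup : |crossP w V| * nrm u ≤ nrm w + |crossP w u| * nrm V := by
    rw [h1]
    calc ‖((crossP u V : ℝ) : ℂ) * ⟨w.1, w.2⟩ + ((crossP w u : ℝ) : ℂ) * ⟨V.1, V.2⟩‖
        ≤ ‖((crossP u V : ℝ) : ℂ) * ⟨w.1, w.2⟩‖ + ‖((crossP w u : ℝ) : ℂ) * ⟨V.1, V.2⟩‖ :=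
          norm_add_le _ _
      _ = nrm w + |crossP w u| * nrm V := by
          rw [norm_mul, norm_mul, Complex.norm_real, Complex.norm_real,
            Real.norm_eq_abs, Real.norm_eq_abs, hs, ← nrm_eq_norm, ← nrm_eq_norm, one_mul]
  have hlow : nrm w - |crossP w u| * nrm V ≤ |crossP w V| * nrm u := by
    rw [h1]
    have h2 : nrm w = ‖(((crossP u V : ℝ) : ℂ) * ⟨w.1, w.2⟩ + ((crossP w u : ℝ) : ℂ) * ⟨V.1, V.2⟩) - ((crossP w u : ℝ) : ℂ) * ⟨V.1, V.2⟩‖ := by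
      rw [add_sub_cancel_right, norm_mul, Complex.norm_real, Real.norm_eq_abs, hs,
        one_mul, ← nrm_eq_norm]
    have h3 := norm_sub_le (((crossP u V : ℝ) : ℂ) * ⟨w.1, w.2⟩ + ((crossP w u : ℝ) : ℂ) * ⟨V.1, V.2⟩) (((crossP w u : ℝ) : ℂ) * ⟨V.1, V.2⟩)
    rw [← h2] at h3
    rw [norm_mul, Complex.norm_real, Real.norm_eq_abs, ← nrm_eq_norm] at h3
    linarith
  have hC : 0 < |crossP w V| := abs_pos.2 hc
  have hNw : 0 < nrm w := nrm_pos w hw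
  have hNv : 0 ≤ nrm V := nrm_nonneg V
  have hx0 : 0 ≤ |crossP w u| := abs_nonneg _
  have hkey : |crossP w u| * nrm V ≤ ε / b * nrm w := by
    rw [div_mul_eq_mul_div, le_div_iff₀ hb]
    have hh1 : |crossP w u| ≤ ε / 2 := by linarith
    have hh2 : nrm V * b ≤ nrm w := by nlinarith
    nlinarith [mul_le_mul hh1 hh2 (mul_nonneg hNv hb.le) (by linarith : (0:ℝ) ≤ ε / 2),
      mul_nonneg (by linarith : (0:ℝ) ≤ ε) hNw.le]
  set E := ε / b with hE
  constructor
  · rw [div_le_iff₀ hC]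
    nlinarith [hkey, hlow]
  · rw [le_div_iff₀ hC]
    nlinarith [hkey, hup]

/-- Lemma "|u|".  If `w` has irrational slope and `v ∈ Z`, there is a
unique `u ∈ Z` with `|w×u| < |w×v|/2`, `|u×v| = 1` and `w·u > 0`; and if `b > 0`,
`|w| > b|v|` and `|w×v| ≤ ε ≤ 1/(2√2)`, then
`(1−ε/b)|w|/|w×v| ≤ |u| ≤ (1+ε/b)|w|/|w×v|`. -/
theorem slowly_divergent_u_length
    (w : ℝ × ℝ) (hw : w ≠ 0)
    (hirr : ∀ p q : ℤ, ¬(p = 0 ∧ q = 0) → ∀ c : ℝ,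
      w ≠ c • (((p : ℝ), (q : ℝ)) : ℝ × ℝ))
    (v : ℝ × ℝ) (hv : v ∈ Zset) :
    ∃ u : ℝ × ℝ,
      (u ∈ Zset ∧ |crossP w u| < |crossP w v| / 2 ∧ |crossP u v| = 1 ∧
        0 < dotP w u) ∧
      (∀ u' : ℝ × ℝ,
        (u' ∈ Zset ∧ |crossP w u'| < |crossP w v| / 2 ∧ |crossP u' v| = 1 ∧
          0 < dotP w u') → u' = u) ∧
      ∀ b ε : ℝ, 0 < b → b * nrm v < nrm w → |crossP w v| ≤ ε →
        ε ≤ 1 / (2 * Real.sqrt 2) →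
        (1 - ε / b) * nrm w / |crossP w v| ≤ nrm u ∧
        nrm u ≤ (1 + ε / b) * nrm w / |crossP w v| := by
  obtain ⟨p, q, hpq, rfl⟩ := hv
  have key := cross_ne w hirr
  have hpq0 : ¬(p = 0 ∧ q = 0) := by
    rintro ⟨rfl, rfl⟩
    simp [Int.gcd] at hpq
  obtain ⟨A, B, hbez⟩ : ∃ A B : ℤ, p * A + q * B = 1 := by
    refine ⟨Int.gcdA p q, Int.gcdB p q, ?_⟩
    have h := Int.gcd_eq_gcd_ab p q
    rw [hpq] at h
    exact_mod_cast h.symm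
  set c := crossP w ((p:ℝ), (q:ℝ)) with hc_def
  have hc : c ≠ 0 := key p q hpq0
  have hc' : c = w.1 * (q:ℝ) - w.2 * (p:ℝ) := hc_def
  set a := crossP w ((B:ℝ), -(A:ℝ)) with ha_def
  have ha' : a = w.1 * (-(A:ℝ)) - w.2 * (B:ℝ) := ha_def
  set t := round (a / c) with ht
  have habs : |a - t * c| ≤ |c| / 2 := by
    have h := abs_sub_round (a / c)
    have he : a - t * c = (a / c - t) * c := by field_simp
    rw [he, abs_mul]
    calc |a / c - t| * |c| ≤ (1/2) * |c| := mul_le_mul_of_nonneg_right h (abs_nonneg c)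
      _ = |c| / 2 := by ring
  -- no half-integer coincidence
  have hzero : ∀ k : ℤ, 2 * a - k * c ≠ 0 := by
    intro k hk
    apply key (2*B - k*p) (-2*A - k*q)
    · rintro ⟨h1, h2⟩
      have h3 : (2:ℤ) = q * (2*B - k*p) - p * (-2*A - k*q) := by linear_combination (-2) * hbez
      rw [h1, h2] at h3
      simp at h3
    · show w.1 * ((-2*A - k*q : ℤ) : ℝ) - w.2 * ((2*B - k*p : ℤ) : ℝ) = 0
      push_cast
      linear_combination hk - 2 * ha' + (k:ℝ) * hc'
  have hstrict : |a - t * c| < |c| / 2 := by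
    rcases lt_or_eq_of_le habs with h | h
    · exact h
    exfalso
    rcases (abs_eq (by positivity : (0:ℝ) ≤ |c| / 2)).mp h with h' | h'
    · rcases abs_cases c with ⟨hc1, _⟩ | ⟨hc1, _⟩
      · exact hzero (2*t + 1) (by push_cast; linear_combination 2 * h' + hc1)
      · exact hzero (2*t - 1) (by push_cast; linear_combination 2 * h' + hc1)
    · rcases abs_cases c with ⟨hc1, _⟩ | ⟨hc1, _⟩
      · exact hzero (2*t - 1) (by push_cast; linear_combination 2 * h' - hc1)
      · exact hzero (2*t + 1) (by push_cast; linear_combination 2 * h' - hc1)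
  obtain ⟨m, hm⟩ : ∃ m : ℤ, m = B - t * p := ⟨_, rfl⟩
  obtain ⟨n, hn⟩ : ∃ n : ℤ, n = -A - t * q := ⟨_, rfl⟩
  have hcrossZ : m * q - n * p = 1 := by rw [hm, hn]; linear_combination hbez
  have hcrossR : crossP ((m:ℝ), (n:ℝ)) ((p:ℝ), (q:ℝ)) = 1 := by
    show (m:ℝ) * q - (n:ℝ) * p = 1
    exact_mod_cast hcrossZ
  have hwu1 : crossP w ((m:ℝ), (n:ℝ)) = a - t * c := by
    show w.1 * (n:ℝ) - w.2 * (m:ℝ) = a - t * c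
    rw [hm, hn]
    push_cast
    linear_combination -ha' + (t:ℝ) * hc'
  -- uniqueness on the level of integer coordinates
  have uniq : ∀ m' n' : ℤ, m' * q - n' * p = 1 →
      |crossP w ((m':ℝ), (n':ℝ))| < |c| / 2 → m' = m ∧ n' = n := by
    intro m' n' h1 h2
    obtain ⟨k, hk⟩ : ∃ k : ℤ, k = A * (m' - m) + B * (n' - n) := ⟨_, rfl⟩
    have hrel : (m' - m) * q = (n' - n) * p := by linear_combination h1 - hcrossZ
    have hkp : k * p = m' - m := by
      rw [hk]; linear_combination (m' - m) * hbez - B * hrel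
    have hkq : k * q = n' - n := by
      rw [hk]; linear_combination (n' - n) * hbez + A * hrel
    have hkpR : (k:ℝ) * p = (m':ℝ) - m := by exact_mod_cast hkp
    have hkqR : (k:ℝ) * q = (n':ℝ) - n := by exact_mod_cast hkq
    have hwu1' : w.1 * (n:ℝ) - w.2 * (m:ℝ) = a - t * c := hwu1
    have hcr : crossP w ((m':ℝ), (n':ℝ)) = (a - t * c) + k * c := by
      show w.1 * (n':ℝ) - w.2 * (m':ℝ) = (a - t * c) + k * c
      linear_combination hwu1' - w.1 * hkqR + w.2 * hkpR - (k:ℝ) * hc'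
    rw [hcr] at h2
    have h3 : |(k:ℝ)| * |c| < |c| := by
      have h4 : |(k:ℝ) * c| = |((a - t*c) + k*c) + (-(a - t*c))| := by ring_nf
      have h5 := abs_add_le ((a - t*c) + k*c) (-(a - t*c))
      rw [abs_neg] at h5
      rw [← abs_mul]
      calc |(k:ℝ) * c| = |((a - t*c) + k*c) + (-(a - t*c))| := h4
        _ ≤ |(a - t*c) + k*c| + |a - t*c| := h5
        _ < |c| / 2 + |c| / 2 := by exact add_lt_add h2 hstrict
        _ = |c| := by ring
    have hCpos : 0 < |c| := abs_pos.2 hc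
    have hk1 : |(k:ℝ)| < 1 := by nlinarith
    have hkz : k = 0 := by
      have h7 : |k| < 1 := by exact_mod_cast (by rwa [← Int.cast_abs] at hk1 : ((|k|:ℤ):ℝ) < 1)
      have h8 := abs_lt.mp h7
      omega
    rw [hkz] at hkp hkq
    simp only [zero_mul] at hkp hkq
    constructor <;> omega
  -- the sign of w · u₁
  have hd : dotP w ((m:ℝ), (n:ℝ)) ≠ 0 := by
    intro hdz
    apply key (-n) m
    · rintro ⟨h1, h2⟩
      rw [h2] at hcrossZ
      have : n = 0 := by omega
      rw [this] at hcrossZ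
      simp at hcrossZ
    · show w.1 * ((m:ℤ):ℝ) - w.2 * ((-n:ℤ):ℝ) = 0
      have hdz' : w.1 * (m:ℝ) + w.2 * (n:ℝ) = 0 := hdz
      push_cast
      linear_combination hdz'
  rcases lt_or_gt_of_ne hd with hneg | hpos
  · -- use u = (-m, -n)
    have hwu2 : crossP w (((-m:ℤ):ℝ), ((-n:ℤ):ℝ)) = -(a - t * c) := by
      show w.1 * ((-n:ℤ):ℝ) - w.2 * ((-m:ℤ):ℝ) = -(a - t * c)
      have hwu1'' : w.1 * (n:ℝ) - w.2 * (m:ℝ) = a - t * c := hwu1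
      push_cast
      linear_combination -hwu1''
    have hcrossR2 : crossP (((-m:ℤ):ℝ), ((-n:ℤ):ℝ)) ((p:ℝ), (q:ℝ)) = -1 := by
      show ((-m:ℤ):ℝ) * q - ((-n:ℤ):ℝ) * p = -1
      have hcrossR' : (m:ℝ) * q - (n:ℝ) * p = 1 := hcrossR
      push_cast
      linear_combination -hcrossR'
    have hxb : |crossP w (((-m:ℤ):ℝ), ((-n:ℤ):ℝ))| < |c| / 2 := by
      rw [hwu2, abs_neg]; exact hstrict
    have hsb : |crossP (((-m:ℤ):ℝ), ((-n:ℤ):ℝ)) ((p:ℝ), (q:ℝ))| = 1 := by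
      rw [hcrossR2, abs_neg, abs_one]
    have hdb : 0 < dotP w (((-m:ℤ):ℝ), ((-n:ℤ):ℝ)) := by
      have hneg' : w.1 * (m:ℝ) + w.2 * (n:ℝ) < 0 := hneg
      show 0 < w.1 * ((-m:ℤ):ℝ) + w.2 * ((-n:ℤ):ℝ)
      push_cast
      linarith
    refine ⟨(((-m:ℤ):ℝ), ((-n:ℤ):ℝ)), ⟨⟨-m, -n, ?_, rfl⟩, hxb, hsb, hdb⟩, ?_, ?_⟩
    · exact Int.isCoprime_iff_gcd_eq_one.mp ⟨-q, p, by linear_combination hcrossZ⟩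
    · rintro u' ⟨⟨m', n', hg', rfl⟩, hu'x, hu's, hu'd⟩
      have hs1 : |m' * q - n' * p| = 1 := by
        have h6 : |((m' * q - n' * p : ℤ) : ℝ)| = 1 := by
          push_cast
          exact hu's
        exact_mod_cast h6
      rcases (abs_eq (by norm_num : (0:ℤ) ≤ 1)).mp hs1 with h1 | h1
      · exfalso
        obtain ⟨e1, e2⟩ := uniq m' n' h1 hu'x
        have hde : dotP w ((m':ℝ), (n':ℝ)) = dotP w ((m:ℝ), (n:ℝ)) := by
          rw [e1, e2]
        rw [hde] at hu'd
        linarith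
      · have h1' : (-m') * q - (-n') * p = 1 := by linarith
        have hx' : |crossP w (((-m':ℤ):ℝ), ((-n':ℤ):ℝ))| < |c| / 2 := by
          have he : crossP w (((-m':ℤ):ℝ), ((-n':ℤ):ℝ)) = -crossP w ((m':ℝ), (n':ℝ)) := by
            show w.1 * ((-n':ℤ):ℝ) - w.2 * ((-m':ℤ):ℝ) = -(w.1 * (n':ℝ) - w.2 * (m':ℝ))
            push_cast; ring
          rw [he, abs_neg]
          exact hu'x
        obtain ⟨e1, e2⟩ := uniq (-m') (-n') h1' hx'
        have em : m' = -m := by omega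
        have en : n' = -n := by omega
        rw [em, en]
    · intro b ε hb hbv hce hεu
      exact bounds_aux w (((-m:ℤ):ℝ), ((-n:ℤ):ℝ)) ((p:ℝ), (q:ℝ)) hw hc hsb hxb b ε hb hbv hce hεu
  · -- use u = (m, n)
    have hxb : |crossP w ((m:ℝ), (n:ℝ))| < |c| / 2 := by
      rw [hwu1]; exact hstrict
    have hsb : |crossP ((m:ℝ), (n:ℝ)) ((p:ℝ), (q:ℝ))| = 1 := by
      rw [hcrossR, abs_one]
    refine ⟨((m:ℝ), (n:ℝ)), ⟨⟨m, n, ?_, rfl⟩, hxb, hsb, hpos⟩, ?_, ?_⟩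
    · exact Int.isCoprime_iff_gcd_eq_one.mp ⟨q, -p, by linear_combination hcrossZ⟩
    · rintro u' ⟨⟨m', n', hg', rfl⟩, hu'x, hu's, hu'd⟩
      have hs1 : |m' * q - n' * p| = 1 := by
        have h6 : |((m' * q - n' * p : ℤ) : ℝ)| = 1 := by
          push_cast
          exact hu's
        exact_mod_cast h6
      rcases (abs_eq (by norm_num : (0:ℤ) ≤ 1)).mp hs1 with h1 | h1
      · obtain ⟨e1, e2⟩ := uniq m' n' h1 hu'x
        rw [e1, e2]
      · exfalso
        have h1' : (-m') * q - (-n') * p = 1 := by linarith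
        have hx' : |crossP w (((-m':ℤ):ℝ), ((-n':ℤ):ℝ))| < |c| / 2 := by
          have he : crossP w (((-m':ℤ):ℝ), ((-n':ℤ):ℝ)) = -crossP w ((m':ℝ), (n':ℝ)) := by
            show w.1 * ((-n':ℤ):ℝ) - w.2 * ((-m':ℤ):ℝ) = -(w.1 * (n':ℝ) - w.2 * (m':ℝ))
            push_cast; ring
          rw [he, abs_neg]
          exact hu'x
        obtain ⟨e1, e2⟩ := uniq (-m') (-n') h1' hx'
        have em : m' = -m := by omega
        have en : n' = -n := by omega
        have hde : dotP w ((m':ℝ), (n':ℝ)) = -dotP w ((m:ℝ), (n:ℝ)) := by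
          rw [em, en]
          show w.1 * ((-m:ℤ):ℝ) + w.2 * ((-n:ℤ):ℝ) = -(w.1 * (m:ℝ) + w.2 * (n:ℝ))
          push_cast; ring
        rw [hde] at hu'd
        linarith
    · intro b ε hb hbv hce hεu
      exact bounds_aux w ((m:ℝ), (n:ℝ)) ((p:ℝ), (q:ℝ)) hw hc hsb hxb b ε hb hbv hce hεu
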